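/- Let G be a Lie group acting smoothly on a smooth manifold M, let X be a G-equivariant vector field on M, let m ∈ M be a relative equilibrium of X with velocity ξ ∈ 𝔤 (X(m) = T ev_m(ξ)), and let γ : ℝ → G be a smooth group homomorphism with derivative ξ at 0 (i.e. the differential of γ at 0 sends 1 ∈ T₀ℝ ≅ ℝ to ξ; γ plays the role of τ ↦ exp(τξ)). Then the curve τ ↦ γ(τ)·m is the integral curve of X starting at m: for every τ ∈ ℝ, its derivative at τ equals X(γ(τ)·m). -/

import Mathlib

open scoped Manifold

/-- Let `G` be a Lie group acting smoothly on a smooth manifold `M`, let `X`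
be a `G`-equivariant vector field on `M`, let `m` be a relative equilibrium of `X` with velocity
`ξ ∈ 𝔤` (i.e. `X m = T ev_m ξ`), and let `γ : ℝ → G` be a smooth group homomorphism whose
differential at `0` sends `1 ∈ T₀ℝ ≅ ℝ` to `ξ` (so `γ` plays the role of `τ ↦ exp (τ ξ)`).
Then `τ ↦ γ τ • m` is the integral curve of `X` starting at `m`. -/
theorem integral_curve_of_relative_equilibrium
    {EG : Type*} [NormedAddCommGroup EG] [NormedSpace ℝ EG]
    {HG : Type*} [TopologicalSpace HG] {IG : ModelWithCorners ℝ EG HG}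
    {G : Type*} [TopologicalSpace G] [ChartedSpace HG G] [Group G]
    [IsManifold IG (⊤ : ℕ∞) G] [LieGroup IG (⊤ : ℕ∞) G]
    {EM : Type*} [NormedAddCommGroup EM] [NormedSpace ℝ EM]
    {HM : Type*} [TopologicalSpace HM] {IM : ModelWithCorners ℝ EM HM}
    {M : Type*} [TopologicalSpace M] [ChartedSpace HM M] [IsManifold IM (⊤ : ℕ∞) M]
    [MulAction G M]
    (hact : ContMDiff (IG.prod IM) IM (⊤ : ℕ∞) fun p : G × M => p.1 • p.2)
    (X : (x : M) → TangentSpace IM x)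
    (hX_equiv : ∀ (g : G) (p : M), X (g • p) = mfderiv IM IM (fun q : M => g • q) p (X p))
    (m : M) (ξ : TangentSpace IG (1 : G))
    (hrel : X m = mfderiv IG IM (fun g : G => g • m) (1 : G) ξ)
    (γ : ℝ → G)
    (hγ_smooth : ContMDiff 𝓘(ℝ, ℝ) IG (⊤ : ℕ∞) γ)
    (hγ_one : γ 0 = 1)
    (hγ_hom : ∀ s t : ℝ, γ (s + t) = γ s * γ t)
    (hγ_deriv : mfderiv 𝓘(ℝ, ℝ) IG γ 0 (1 : ℝ) = ξ) :
    IsMIntegralCurve (fun τ : ℝ => γ τ • m) X := by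
  have hev_smooth : ContMDiff IG IM (⊤ : ℕ∞) (fun g : G => g • m) :=
    hact.comp (contMDiff_id.prodMk contMDiff_const)
  intro t₀
  have hγ0 : HasMFDerivAt 𝓘(ℝ, ℝ) IG γ 0 (mfderiv 𝓘(ℝ, ℝ) IG γ 0) :=
    (hγ_smooth 0).mdifferentiableAt (by simp) |>.hasMFDerivAt
  have hev1 : HasMFDerivAt IG IM (fun g : G => g • m) (γ 0)
      (mfderiv IG IM (fun g : G => g • m) (γ 0)) :=
    (hev_smooth (γ 0)).mdifferentiableAt (by simp) |>.hasMFDerivAt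
  have h1 := hev1.comp 0 hγ0
  rw [show (0:ℝ) = t₀ - t₀ by ring] at h1
  have hshift : HasMFDerivAt 𝓘(ℝ, ℝ) 𝓘(ℝ, ℝ) (fun τ : ℝ => τ - t₀) t₀
      (ContinuousLinearMap.id ℝ ℝ) :=
    hasMFDerivAt_iff_hasFDerivAt.mpr ((hasFDerivAt_id t₀).sub_const t₀)
  have h2 : HasMFDerivAt 𝓘(ℝ, ℝ) IM (((fun g : G => g • m) ∘ γ) ∘ (fun τ : ℝ => τ - t₀)) t₀
      (((mfderiv IG IM (fun g : G => g • m) (γ (t₀ - t₀))).comp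
        (mfderiv 𝓘(ℝ, ℝ) IG γ (t₀ - t₀))).comp (ContinuousLinearMap.id ℝ ℝ)) :=
    HasMFDerivAt.comp (f := fun τ : ℝ => τ - t₀) t₀ h1 hshift
  have hsm_at : HasMFDerivAt IM IM (fun p : M => γ t₀ • p) (γ (t₀ - t₀) • m)
      (mfderiv IM IM (fun p : M => γ t₀ • p) (γ (t₀ - t₀) • m)) :=
    ((hact.comp (contMDiff_const.prodMk contMDiff_id)) (γ (t₀ - t₀) • m)).mdifferentiableAt
      (by simp) |>.hasMFDerivAt
  have h3 := hsm_at.comp t₀ h2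
  have heq : (fun τ : ℝ => γ τ • m)
      = ((fun p : M => γ t₀ • p) ∘ ((fun g : G => g • m) ∘ γ) ∘ (fun τ : ℝ => τ - t₀)) := by
    funext τ
    simp only [Function.comp_apply, ← mul_smul, ← hγ_hom, add_sub_cancel]
  rw [heq]
  have hL : ((mfderiv IM IM (fun p : M => γ t₀ • p) (γ (t₀ - t₀) • m)).comp
      (((mfderiv IG IM (fun g : G => g • m) (γ (t₀ - t₀))).comp
        (mfderiv 𝓘(ℝ, ℝ) IG γ (t₀ - t₀))).comp (ContinuousLinearMap.id ℝ ℝ)))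
      = ContinuousLinearMap.smulRight (1 : ℝ →L[ℝ] ℝ)
        (X (((fun p : M => γ t₀ • p) ∘ ((fun g : G => g • m) ∘ γ) ∘ (fun τ : ℝ => τ - t₀)) t₀)) := by
    apply ContinuousLinearMap.ext_ring
    simp only [Function.comp_apply, ContinuousLinearMap.comp_apply,
      ContinuousLinearMap.smulRight_apply, ContinuousLinearMap.one_apply,
      ContinuousLinearMap.id_apply]
    rw [sub_self, hγ_one, one_smul]
    exact (((congrArg (mfderiv IM IM (fun p : M => γ t₀ • p) m)
      ((congrArg (mfderiv IG IM (fun g : G => g • m) 1)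
        (show (mfderiv 𝓘(ℝ, ℝ) IG γ 0) ((ContinuousLinearMap.id ℝ ℝ) 1) = ξ from hγ_deriv)).trans
          hrel.symm)).trans (hX_equiv (γ t₀) m).symm).trans (one_smul ℝ _).symm)
  exact hL ▸ h3
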